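/- Let α be a closed subspace of a complex Hilbert space, x a ray not orthogonal to α, and y a ray contained in α. Then p(x,y) = p(x, α(x)) · p(α(x), y), where α(x) denotes the ray spanned by the projection of x onto α. -/

import Mathlib

local notation "⟪" x ", " y "⟫" => @inner ℂ _ _ x y

/-- The similarity `p` between the rays spanned by two nonzero vectors:
for unit vectors it is the squared modulus of the inner product. -/
noncomputable def pRay {H : Type*} [NormedAddCommGroup H] [InnerProductSpace ℂ H]
    (s t : H) : ℝ :=
  ‖⟪s, t⟫‖ ^ 2 / (‖s‖ ^ 2 * ‖t‖ ^ 2)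

theorem p_projection_factorization {H : Type*} [NormedAddCommGroup H]
    [InnerProductSpace ℂ H] [CompleteSpace H]
    (α : Submodule ℂ H) (hαc : IsClosed (α : Set H)) [CompleteSpace α]
    (x y : Submodule ℂ H) (u v : H) (hu : u ≠ 0) (hv : v ≠ 0)
    (hx : x = Submodule.span ℂ {u}) (hy : y = Submodule.span ℂ {v})
    (hyα : y ≤ α)
    (hno : ¬ ∀ a ∈ x, ∀ b ∈ α, ⟪a, b⟫ = 0) :
    pRay u v =
      pRay u (α.orthogonalProjectionOnto u : H) * pRay (α.orthogonalProjectionOnto u : H) v := by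
  set w : H := (α.orthogonalProjectionOnto u : H) with hw
  have hsub : u - w ∈ αᗮ := α.sub_starProjection_mem_orthogonal u
  have hinner : ∀ b ∈ α, ⟪u, b⟫ = ⟪w, b⟫ := by
    intro b hb
    have h0 : ⟪u - w, b⟫ = 0 := by
      exact (Submodule.mem_orthogonal αᗮ b).mp
        ((Submodule.le_orthogonal_orthogonal α) hb) (u - w) hsub
    rw [inner_sub_left] at h0
    exact sub_eq_zero.mp h0
  -- v ∈ α
  have hvα : v ∈ α := hyα (hy ▸ Submodule.mem_span_singleton_self v)
  have huv : ⟪u, v⟫ = ⟪w, v⟫ := hinner v hvα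
  -- ⟪u, w⟫ = ‖w‖²
  have hwmem : w ∈ α := (α.orthogonalProjectionOnto u).2
  have huw : ⟪u, w⟫ = (‖w‖ : ℂ) ^ 2 := by
    rw [hinner w hwmem, inner_self_eq_norm_sq_to_K]; norm_cast
  -- w ≠ 0
  have hwne : w ≠ 0 := by
    intro h0
    apply hno
    intro a ha b hb
    rw [hx, Submodule.mem_span_singleton] at ha
    obtain ⟨c, rfl⟩ := ha
    rw [inner_smul_left, hinner b hb, h0, inner_zero_left, mul_zero]
  have hnwu : ‖u‖ ≠ 0 := norm_ne_zero_iff.mpr hu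
  have hnwv : ‖v‖ ≠ 0 := norm_ne_zero_iff.mpr hv
  have hnww : ‖w‖ ≠ 0 := norm_ne_zero_iff.mpr hwne
  unfold pRay
  rw [huv, huw]
  have habs : ‖((‖w‖ : ℂ) ^ 2)‖ = ‖w‖ ^ 2 := by
    rw [norm_pow, Complex.norm_real, Real.norm_eq_abs, abs_of_nonneg (norm_nonneg w)]
  rw [habs]
  field_simp
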